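/- For all α > 0, θ > 0 and β > 0, the second raw moment of the extended xgamma distribution is ∫₀^∞ x² · f(x; α, θ, β) dx = (θ·α·(α+1) + β·(α+2)·(α+3)) / (θ²·(θ+β)). -/

import Mathlib

open MeasureTheory Real

lemma exg_aux_integrable {a r : ℝ} (ha : 0 < a) (hr : 0 < r) :
    IntegrableOn (fun x : ℝ => x ^ (a - 1) * Real.exp (-(r * x))) (Set.Ioi 0) := by
  have h := integrableOn_rpow_mul_exp_neg_mul_rpow (s := a - 1) (p := 1) (b := r)
    (by linarith) one_pos hr
  refine h.congr_fun (fun x hx => ?_) measurableSet_Ioi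
  beta_reduce
  rw [Real.rpow_one, neg_mul]

/-- The second raw moment of the extended xgamma distribution. -/
theorem exg_second_moment (α θ β : ℝ) (hα : 0 < α) (hθ : 0 < θ) (hβ : 0 < β) :
    ∫ x in Set.Ioi (0 : ℝ),
        x ^ 2 * ((θ ^ (α + 1) / ((θ + β) * Real.Gamma (α + 2))) * (α ^ 2 + α + θ * β * x ^ 2) *
          Real.exp (-θ * x) * x ^ (α - 1))
      = (θ * α * (α + 1) + β * (α + 2) * (α + 3)) / (θ ^ 2 * (θ + β)) := by
  set K : ℝ := θ ^ (α + 1) / ((θ + β) * Real.Gamma (α + 2)) with hK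
  have h1 : ∫ x in Set.Ioi (0:ℝ),
      (K * (α ^ 2 + α) * (x ^ (α + 2 - 1) * Real.exp (-(θ * x)))
        + K * (θ * β) * (x ^ (α + 4 - 1) * Real.exp (-(θ * x))))
      = K * (α ^ 2 + α) * ((1/θ) ^ (α + 2) * Real.Gamma (α + 2))
        + K * (θ * β) * ((1/θ) ^ (α + 4) * Real.Gamma (α + 4)) := by
    rw [integral_add ((exg_aux_integrable (by linarith) hθ).const_mul _)
        ((exg_aux_integrable (by linarith) hθ).const_mul _),
      integral_const_mul, integral_const_mul,
      Real.integral_rpow_mul_exp_neg_mul_Ioi (by linarith) hθ,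
      Real.integral_rpow_mul_exp_neg_mul_Ioi (by linarith) hθ]
  have heq : ∫ x in Set.Ioi (0 : ℝ),
      x ^ 2 * (K * (α ^ 2 + α + θ * β * x ^ 2) * Real.exp (-θ * x) * x ^ (α - 1))
      = ∫ x in Set.Ioi (0:ℝ),
      (K * (α ^ 2 + α) * (x ^ (α + 2 - 1) * Real.exp (-(θ * x)))
        + K * (θ * β) * (x ^ (α + 4 - 1) * Real.exp (-(θ * x)))) := by
    refine setIntegral_congr_fun measurableSet_Ioi (fun x hx => ?_)
    have hx0 : (0:ℝ) < x := hx
    have h2 : (x : ℝ) ^ (2:ℕ) = x ^ (2:ℝ) := by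
      rw [← Real.rpow_natCast x 2]; norm_num
    have e1 : x ^ (α - 1) * x ^ (2:ℝ) = x ^ (α + 2 - 1) := by
      rw [← Real.rpow_add hx0]; ring_nf
    have e2 : x ^ (α - 1) * x ^ (2:ℝ) * x ^ (2:ℝ) = x ^ (α + 4 - 1) := by
      rw [← Real.rpow_add hx0, ← Real.rpow_add hx0]; ring_nf
    rw [neg_mul]
    calc x ^ 2 * (K * (α ^ 2 + α + θ * β * x ^ 2) * Real.exp (-(θ * x)) * x ^ (α - 1))
        = K * (α ^ 2 + α) * ((x ^ (α - 1) * x ^ (2:ℝ)) * Real.exp (-(θ * x)))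
          + K * (θ * β) * ((x ^ (α - 1) * x ^ (2:ℝ) * x ^ (2:ℝ)) * Real.exp (-(θ * x))) := by
          rw [← h2]; ring
      _ = _ := by rw [e2, e1]
  rw [heq, h1]
  have hG2 : 0 < Real.Gamma (α + 2) := Real.Gamma_pos_of_pos (by linarith)
  have hG4 : Real.Gamma (α + 4) = (α + 3) * ((α + 2) * Real.Gamma (α + 2)) := by
    have e1 : α + 4 = (α + 3) + 1 := by ring
    have e2 : α + 3 = (α + 2) + 1 := by ring
    rw [e1, Real.Gamma_add_one (by linarith), e2, Real.Gamma_add_one (by linarith)]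
  have hr2 : θ ^ (α + 1) * (1/θ) ^ (α + 2) = 1 / θ := by
    rw [one_div, Real.inv_rpow hθ.le, ← Real.rpow_neg hθ.le, ← Real.rpow_add hθ]
    have : α + 1 + -(α + 2) = -1 := by ring
    rw [this, Real.rpow_neg_one]
  have hr4 : θ ^ (α + 1) * (1/θ) ^ (α + 4) = 1 / θ ^ (3:ℕ) := by
    rw [one_div, Real.inv_rpow hθ.le, ← Real.rpow_neg hθ.le, ← Real.rpow_add hθ]
    have : α + 1 + -(α + 4) = -(3:ℝ) := by ring
    rw [this, Real.rpow_neg hθ.le, ← Real.rpow_natCast θ 3]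
    norm_num
  have hθβ : θ + β ≠ 0 := by positivity
  calc K * (α ^ 2 + α) * ((1/θ) ^ (α + 2) * Real.Gamma (α + 2))
        + K * (θ * β) * ((1/θ) ^ (α + 4) * Real.Gamma (α + 4))
      = (θ ^ (α+1) * (1/θ) ^ (α + 2)) * ((α ^ 2 + α) / (θ + β))
        + (θ ^ (α+1) * (1/θ) ^ (α + 4)) * ((θ * β * (α + 3) * (α + 2)) / (θ + β)) := by
        rw [hK, hG4]; field_simp
    _ = (1/θ) * ((α ^ 2 + α) / (θ + β)) + (1/θ ^ (3:ℕ)) * ((θ * β * (α + 3) * (α + 2)) / (θ + β)) := by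
        rw [hr2, hr4]
    _ = (θ * α * (α + 1) + β * (α + 2) * (α + 3)) / (θ ^ 2 * (θ + β)) := by
        field_simp
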